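/- In Example 1, for every point q ∈ M = {G₁ = c₁, G₂ = c₂} (c₁ > c₂ > 0) that lies outside the union of the two critical sets {x₁²+y₁² = √c₁, x₂ = y₂ = 0, x₃²+y₃² = c₂} and {x₁²+y₁² = √(c₁−c₂), x₂²+y₂² = c₂, x₃ = y₃ = 0}, the vector Z₁(q) does not belong to the kernel of ω₀ restricted to T_qM; that is, there exists v ∈ T_qM with ω₀(Z₁(q), v) ≠ 0. -/

import Mathlib

open Real Complex
noncomputable section

/-- `G₁ = (x₁² + y₁²)² + x₂² + y₂²` on `ℝ⁶ ≃ ℂ³` (via `z_j = x_j + i y_j`). -/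
def G₁ (z : Fin 3 → ℂ) : ℝ :=
  ((z 0).re ^ 2 + (z 0).im ^ 2) ^ 2 + (z 1).re ^ 2 + (z 1).im ^ 2

/-- `G₂ = x₂² + y₂² + x₃² + y₃²`. -/
def G₂ (z : Fin 3 → ℂ) : ℝ :=
  (z 1).re ^ 2 + (z 1).im ^ 2 + (z 2).re ^ 2 + (z 2).im ^ 2

/-- `Z₁(z)_j = 2πi z_j`, i.e. `Z₁ = Σ_{j=1}^{3} (−2πy_j ∂/∂x_j + 2πx_j ∂/∂y_j)`. -/
def Z₁ (z : Fin 3 → ℂ) : Fin 3 → ℂ := fun j => (2 * π : ℝ) * Complex.I * z j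

/-- The standard symplectic form `ω₀ = Σ_j dy_j ∧ dx_j` on `ℝ⁶ ≃ ℂ³`:
`ω₀(u, v) = Σ_j (u_{y_j} v_{x_j} − u_{x_j} v_{y_j})`. -/
def ω₀ (u v : Fin 3 → ℂ) : ℝ :=
  ∑ j : Fin 3, ((u j).im * (v j).re - (u j).re * (v j).im)

/-- `M = {G₁ = c₁, G₂ = c₂}`. -/
def Mset (c₁ c₂ : ℝ) : Set (Fin 3 → ℂ) := {z | G₁ z = c₁ ∧ G₂ z = c₂}

/-- The maximum critical set `{z ∈ M : x₁² + y₁² = √c₁, x₂ = y₂ = 0, x₃² + y₃² = c₂}`. -/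
def maxSet (c₁ c₂ : ℝ) : Set (Fin 3 → ℂ) :=
  {z ∈ Mset c₁ c₂ | (z 0).re ^ 2 + (z 0).im ^ 2 = Real.sqrt c₁ ∧ z 1 = 0 ∧
    (z 2).re ^ 2 + (z 2).im ^ 2 = c₂}

/-- The minimum critical set `{z ∈ M : x₁² + y₁² = √(c₁ − c₂), x₂² + y₂² = c₂, x₃ = y₃ = 0}`. -/
def minSet (c₁ c₂ : ℝ) : Set (Fin 3 → ℂ) :=
  {z ∈ Mset c₁ c₂ | (z 0).re ^ 2 + (z 0).im ^ 2 = Real.sqrt (c₁ - c₂) ∧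
    (z 1).re ^ 2 + (z 1).im ^ 2 = c₂ ∧ z 2 = 0}

lemma hre' (q : Fin 3 → ℂ) (j : Fin 3) : HasFDerivAt (fun z : Fin 3 → ℂ => (z j).re)
    (Complex.reCLM.comp (ContinuousLinearMap.proj j)) q :=
  (Complex.reCLM.comp (ContinuousLinearMap.proj j : (Fin 3 → ℂ) →L[ℝ] ℂ)).hasFDerivAt

lemma him' (q : Fin 3 → ℂ) (j : Fin 3) : HasFDerivAt (fun z : Fin 3 → ℂ => (z j).im)
    (Complex.imCLM.comp (ContinuousLinearMap.proj j)) q :=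
  (Complex.imCLM.comp (ContinuousLinearMap.proj j : (Fin 3 → ℂ) →L[ℝ] ℂ)).hasFDerivAt

lemma fderivG₁ (q v : Fin 3 → ℂ) :
    fderiv ℝ G₁ q v
    = 2 * ((q 0).re ^ 2 + (q 0).im ^ 2) * (2 * (q 0).re * (v 0).re + 2 * (q 0).im * (v 0).im)
      + 2 * (q 1).re * (v 1).re + 2 * (q 1).im * (v 1).im := by
  have h0 := ((hre' q 0).mul (hre' q 0)).add ((him' q 0).mul (him' q 0))
  have h := (((h0.mul h0).add ((hre' q 1).mul (hre' q 1))).add ((him' q 1).mul (him' q 1)))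
  have e : G₁ = fun z : Fin 3 → ℂ => (((z 0).re * (z 0).re + (z 0).im * (z 0).im) *
          ((z 0).re * (z 0).re + (z 0).im * (z 0).im) + (z 1).re * (z 1).re) + (z 1).im * (z 1).im := by
    funext z; simp only [G₁]; ring
  have h' : HasFDerivAt (fun z : Fin 3 → ℂ => (((z 0).re * (z 0).re + (z 0).im * (z 0).im) *
          ((z 0).re * (z 0).re + (z 0).im * (z 0).im) + (z 1).re * (z 1).re) + (z 1).im * (z 1).im) _ q := h
  rw [e, h'.fderiv]
  simp [ContinuousLinearMap.add_apply, ContinuousLinearMap.smul_apply]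
  ring

lemma fderivG₂ (q v : Fin 3 → ℂ) :
    fderiv ℝ G₂ q v
    = 2 * (q 1).re * (v 1).re + 2 * (q 1).im * (v 1).im
      + 2 * (q 2).re * (v 2).re + 2 * (q 2).im * (v 2).im := by
  have h := ((((hre' q 1).mul (hre' q 1)).add ((him' q 1).mul (him' q 1))).add
      ((hre' q 2).mul (hre' q 2))).add ((him' q 2).mul (him' q 2))
  have e : G₂ = fun z : Fin 3 → ℂ => (((z 1).re * (z 1).re + (z 1).im * (z 1).im) +
      (z 2).re * (z 2).re) + (z 2).im * (z 2).im := by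
    funext z; simp only [G₂]; ring
  have h' : HasFDerivAt (fun z : Fin 3 → ℂ => (((z 1).re * (z 1).re + (z 1).im * (z 1).im) +
      (z 2).re * (z 2).re) + (z 2).im * (z 2).im) _ q := h
  rw [e, h'.fderiv]
  simp [ContinuousLinearMap.add_apply, ContinuousLinearMap.smul_apply]
  ring


set_option maxHeartbeats 1000000 in
/-- **Example 1 of the paper, `Z₁ ∉ ker(ω₀|_M)` away from the critical sets.**
For every `q ∈ M` outside the union of the two critical sets, the vector `Z₁(q)` does not
belong to the kernel of `ω₀` restricted to `T_qM = ker dG₁(q) ∩ ker dG₂(q)`: there is a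
tangent vector `v ∈ T_qM` with `ω₀(Z₁(q), v) ≠ 0`. -/
theorem example_one_Z1_not_in_ker (c₁ c₂ : ℝ) (h₁₂ : c₂ < c₁) (h₂ : 0 < c₂) :
    ∀ q ∈ Mset c₁ c₂ \ (maxSet c₁ c₂ ∪ minSet c₁ c₂),
      ∃ v : Fin 3 → ℂ,
        fderiv ℝ G₁ q v = 0 ∧ fderiv ℝ G₂ q v = 0 ∧ ω₀ (Z₁ q) v ≠ 0 := by
  rintro q ⟨hqM, hnot⟩
  obtain ⟨hc1, hc2⟩ := hqM
  simp only [G₁] at hc1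
  simp only [G₂] at hc2
  have hr₀nn : 0 ≤ (q 0).re ^ 2 + (q 0).im ^ 2 := by positivity
  have hr₁nn : 0 ≤ (q 1).re ^ 2 + (q 1).im ^ 2 := by positivity
  have hr₂nn : 0 ≤ (q 2).re ^ 2 + (q 2).im ^ 2 := by positivity
  have hr₁pos : 0 < (q 1).re ^ 2 + (q 1).im ^ 2 := by
    rcases hr₁nn.lt_or_eq with h | h
    · exact h
    · exfalso
      apply hnot; left
      have h1 : (q 1).re ^ 2 + (q 1).im ^ 2 = 0 := h.symm
      have h2' := (add_eq_zero_iff_of_nonneg (by positivity) (by positivity)).mp h1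
      have hre0 : (q 1).re = 0 := by
        have := h2'.1; nlinarith [sq_nonneg (q 1).re]
      have him0 : (q 1).im = 0 := by
        have := h2'.2; nlinarith [sq_nonneg (q 1).im]
      have hq1 : q 1 = 0 := Complex.ext (by simpa using hre0) (by simpa using him0)
      refine ⟨⟨hc1, hc2⟩, ?_, hq1, ?_⟩
      · have hr0 : ((q 0).re ^ 2 + (q 0).im ^ 2) ^ 2 = c₁ := by linarith
        rw [← hr0, Real.sqrt_sq hr₀nn]
      · linarith
  have hr₂pos : 0 < (q 2).re ^ 2 + (q 2).im ^ 2 := by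
    rcases hr₂nn.lt_or_eq with h | h
    · exact h
    · exfalso
      apply hnot; right
      have h1 : (q 2).re ^ 2 + (q 2).im ^ 2 = 0 := h.symm
      have h2' := (add_eq_zero_iff_of_nonneg (by positivity) (by positivity)).mp h1
      have hre0 : (q 2).re = 0 := by
        have := h2'.1; nlinarith [sq_nonneg (q 2).re]
      have him0 : (q 2).im = 0 := by
        have := h2'.2; nlinarith [sq_nonneg (q 2).im]
      have hq2 : q 2 = 0 := Complex.ext (by simpa using hre0) (by simpa using him0)
      refine ⟨⟨hc1, hc2⟩, ?_, by linarith, hq2⟩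
      have hr0 : ((q 0).re ^ 2 + (q 0).im ^ 2) ^ 2 = c₁ - c₂ := by linarith
      rw [← hr0, Real.sqrt_sq hr₀nn]
  have hr₀pos : 0 < (q 0).re ^ 2 + (q 0).im ^ 2 := by
    rcases hr₀nn.lt_or_eq with h | h
    · exact h
    · exfalso
      nlinarith
  refine ⟨![q 0,
      ((-2 * ((q 0).re ^ 2 + (q 0).im ^ 2) ^ 2 / ((q 1).re ^ 2 + (q 1).im ^ 2) : ℝ) : ℂ) * q 1,
      ((2 * ((q 0).re ^ 2 + (q 0).im ^ 2) ^ 2 / ((q 2).re ^ 2 + (q 2).im ^ 2) : ℝ) : ℂ) * q 2],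
    ?_, ?_, ?_⟩
  · rw [fderivG₁]
    simp only [Matrix.cons_val_zero, Matrix.cons_val_one, Matrix.head_cons,
      Complex.mul_re, Complex.mul_im, Complex.ofReal_re, Complex.ofReal_im]
    field_simp
    ring
  · rw [fderivG₂]
    simp only [Matrix.cons_val_zero, Matrix.cons_val_one, Matrix.head_cons,
      Matrix.cons_val_two, Matrix.tail_cons,
      Complex.mul_re, Complex.mul_im, Complex.ofReal_re, Complex.ofReal_im]
    field_simp
    ring
  · have key : ω₀ (Z₁ q) ![q 0,
        ((-2 * ((q 0).re ^ 2 + (q 0).im ^ 2) ^ 2 / ((q 1).re ^ 2 + (q 1).im ^ 2) : ℝ) : ℂ) * q 1,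
        ((2 * ((q 0).re ^ 2 + (q 0).im ^ 2) ^ 2 / ((q 2).re ^ 2 + (q 2).im ^ 2) : ℝ) : ℂ) * q 2]
        = 2 * π * ((q 0).re ^ 2 + (q 0).im ^ 2) := by
      simp only [ω₀, Z₁, Fin.sum_univ_three, Matrix.cons_val_zero, Matrix.cons_val_one,
        Matrix.head_cons, Matrix.cons_val_two, Matrix.tail_cons,
        Complex.mul_re, Complex.mul_im, Complex.I_re, Complex.I_im,
        Complex.ofReal_re, Complex.ofReal_im]
      field_simp
      ring
    rw [key]
    have hπ := Real.pi_pos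
    positivity
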